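/- Let G be a finite group and P a G-poset with an initial object x₀; give P⋊G the atomic topology. Then a presheaf of sets on P⋊G is a sheaf if and only if it is isomorphic to the constant presheaf Res_π M = M ∘ π^op for some right G-set M. Moreover, the sheafification of any presheaf 𝔉 on P⋊G is naturally isomorphic to Res_π(𝔉(x₀)), where 𝔉(x₀) is a right G-set via the automorphisms (g, id_{x₀}) of x₀ in P⋊G. -/

import Mathlib

open CategoryTheory

/-! ## Basic site-theoretic notions -/

/-- The Ore condition: any cospan can be completed to a commutative square. -/
def OreCondition (C : Type*) [Category C] : Prop :=
  ∀ ⦃x y z : C⦄ (f : y ⟶ x) (g : z ⟶ x),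
    ∃ (w : C) (p : w ⟶ y) (q : w ⟶ z), p ≫ f = q ≫ g

/-- A Grothendieck topology is the atomic topology iff its covering sieves are
exactly the nonempty sieves. -/
def IsAtomicTopology {C : Type*} [Category C] (J : GrothendieckTopology C) : Prop :=
  ∀ (x : C) (S : Sieve x), S ∈ J x ↔ ∃ (y : C) (f : y ⟶ x), S f

/-- The presieve on `c` consisting of all morphisms with domain `c₀`. -/
def domPresieve {C : Type*} [Category C] (c₀ : C) (c : C) : Presieve c :=
  fun Y => {_f | Y = c₀}

/-! ## Right `G`-sets and the orbit category -/

/-- The category of right `G`-sets, realized as presheaves of sets on the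
one-object category of `G`. -/
abbrev GSet (G : Type) [Group G] := (SingleObj G)ᵒᵖ ⥤ Type

variable {G : Type} [Group G]

/-- The right coset space `H\G` as a right `G`-set (`G` acting by right
multiplication). -/
def cosetGSet (H : Subgroup G) : GSet G where
  obj _ := Quotient (QuotientGroup.rightRel H)
  map f := TypeCat.ofHom (Quotient.map' (fun x => x * f.unop)
    (fun a b hab => by
      rw [QuotientGroup.rightRel_apply] at hab ⊢
      simpa [mul_assoc] using hab))
  map_id _ := by
    ext q
    induction q using Quotient.inductionOn' with
    | h a => exact congrArg (Quotient.mk _) (mul_one a)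
  map_comp f g := by
    ext q
    induction q using Quotient.inductionOn' with
    | h a => exact congrArg (Quotient.mk _) (mul_assoc a f.unop g.unop).symm

/-- The orbit category `O(G)`: the full subcategory of right `G`-sets on the
coset spaces `H\G`, indexed by the subgroups of `G`. -/
abbrev OrbitCat (G : Type) [Group G] := InducedCategory (GSet G) (cosetGSet (G := G))

/-- For `a ∈ G`, the `G`-map `c_a : 1\G → 1\G`, `k ↦ a * k`. -/
def botAuto (a : G) : cosetGSet (⊥ : Subgroup G) ⟶ cosetGSet (⊥ : Subgroup G) where
  app _ := TypeCat.ofHom (Quotient.map' (fun k => a * k)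
    (fun x y hxy => by
      rw [QuotientGroup.rightRel_apply] at hxy ⊢
      simp only [Subgroup.mem_bot] at hxy ⊢
      rw [mul_inv_rev, ← mul_assoc, mul_assoc a, hxy]
      simp))
  naturality X Y f := by
    ext q
    induction q using Quotient.inductionOn' with
    | h k => exact congrArg (Quotient.mk _) (mul_assoc a k f.unop).symm

/-- The functor from the one-object category of `G` to the orbit category with
value `1\G`, sending `a` to `c_a`; it makes `F(1\G)` a right `G`-set for any
presheaf `F` on the orbit category. -/
def orbitBotIota (G : Type) [Group G] : SingleObj G ⥤ OrbitCat G where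
  obj _ := (⊥ : Subgroup G)
  map a := InducedCategory.homMk (botAuto a)
  map_id _ := by
    apply InducedCategory.hom_ext
    apply NatTrans.ext
    ext X q
    induction q using Quotient.inductionOn' with
    | h k => exact congrArg (Quotient.mk _) (one_mul k)
  map_comp {x y z} a b := by
    apply InducedCategory.hom_ext
    apply NatTrans.ext
    ext X q
    induction q using Quotient.inductionOn' with
    | h k => exact congrArg (Quotient.mk _) (mul_assoc b a k)

/-! ## The transporter category of a `G`-poset -/

/-- The transporter category `P ⋊ G` of a `G`-poset `P`: objects are those of
`P`, and morphisms `x ⟶ y` are elements `g ∈ G` with `g • x ≤ y`. -/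
@[ext] structure Transporter (G : Type) (P : Type) where pt : P

instance Transporter.category (G P : Type) [Group G] [PartialOrder P] [MulAction G P]
    [CovariantClass G P (· • ·) (· ≤ ·)] : Category (Transporter G P) where
  Hom x y := { g : G // g • x.pt ≤ y.pt }
  id x := ⟨1, by simp⟩
  comp {x y z} f g := ⟨g.1 * f.1, by
    rw [mul_smul]
    exact le_trans (CovariantClass.elim g.1 f.2) g.2⟩
  id_comp f := Subtype.ext (mul_one _)
  comp_id f := Subtype.ext (one_mul _)
  assoc f g h := Subtype.ext (mul_assoc h.1 g.1 f.1).symm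

variable {P : Type} [PartialOrder P] [MulAction G P]
    [CovariantClass G P (· • ·) (· ≤ ·)]

theorem smul_le_smul_act (g : G) {a b : P} (h : a ≤ b) : g • a ≤ g • b :=
  CovariantClass.elim g h

/-- An initial (i.e. bottom) element of a `G`-poset is fixed by `G`. -/
theorem smul_bot_eq {x₀ : P} (hbot : ∀ x : P, x₀ ≤ x) (g : G) : g • x₀ = x₀ :=
  le_antisymm (by simpa using smul_le_smul_act g (hbot (g⁻¹ • x₀))) (hbot _)

/-- The endomorphism `(g, id)` of the initial object `x₀` of `P ⋊ G`. -/
def gmor {x₀ : P} (hbot : ∀ x : P, x₀ ≤ x) (g : G) :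
    (⟨x₀⟩ : Transporter G P) ⟶ (⟨x₀⟩ : Transporter G P) :=
  ⟨g, le_of_eq (smul_bot_eq hbot g)⟩

theorem gmor_comp {x₀ : P} (hbot : ∀ x : P, x₀ ≤ x) (a b : G) :
    gmor (G := G) hbot b ≫ gmor hbot a = gmor hbot (a * b) := rfl

theorem gmor_one {x₀ : P} (hbot : ∀ x : P, x₀ ≤ x) :
    gmor (G := G) hbot (1 : G) = 𝟙 (⟨x₀⟩ : Transporter G P) := rfl

/-- The projection functor `π : P ⋊ G ⥤ G`. -/
def piFunctor (G P : Type) [Group G] [PartialOrder P] [MulAction G P]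
    [CovariantClass G P (· • ·) (· ≤ ·)] : Transporter G P ⥤ SingleObj G where
  obj _ := SingleObj.star G
  map f := f.1
  map_id _ := rfl
  map_comp _ _ := rfl

/-! ## Quotients of transporter categories and fixed-point presheaves -/

variable {C : Type} [SmallCategory C]

section
variable (ρ : Transporter G P ⥤ C) {x₀ : P} (hbot : ∀ x : P, x₀ ≤ x)

/-- `Hom_C(x₀, c)` as a right `G`-set, with `f · g := ρ(g, id) ≫ f`. -/
def homGSet (c : C) : GSet G where
  obj _ := (ρ.obj ⟨x₀⟩ ⟶ c)
  map f := TypeCat.ofHom fun φ => ρ.map (gmor hbot f.unop) ≫ φ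
  map_id _ := by
    ext φ
    show ρ.map (gmor hbot (1 : G)) ≫ φ = φ
    rw [gmor_one, ρ.map_id, Category.id_comp]
  map_comp {X Y Z} f g := by
    ext φ
    show ρ.map (gmor hbot (f.unop * g.unop)) ≫ φ =
      ρ.map (gmor hbot g.unop) ≫ ρ.map (gmor hbot f.unop) ≫ φ
    rw [← gmor_comp, ρ.map_comp, Category.assoc]

/-- Postcomposition `Hom_C(x₀, c) → Hom_C(x₀, c')` with `φ : c ⟶ c'`, as a map
of right `G`-sets. -/
def homGSetMap {c c' : C} (φ : c ⟶ c') : homGSet ρ hbot c ⟶ homGSet ρ hbot c' where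
  app _ := TypeCat.ofHom fun f => (show ρ.obj ⟨x₀⟩ ⟶ c from f) ≫ φ
  naturality X Y f := by
    ext ψ
    show (ρ.map (gmor hbot f.unop) ≫ (show ρ.obj ⟨x₀⟩ ⟶ c from ψ)) ≫ φ =
      ρ.map (gmor hbot f.unop) ≫ ((show ρ.obj ⟨x₀⟩ ⟶ c from ψ) ≫ φ)
    exact Category.assoc _ _ _

theorem homGSetMap_id (c : C) : homGSetMap ρ hbot (𝟙 c) = 𝟙 (homGSet ρ hbot c) := by
  apply NatTrans.ext
  ext X f
  exact Category.comp_id f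

theorem homGSetMap_comp {c c' c'' : C} (φ : c ⟶ c') (ψ : c' ⟶ c'') :
    homGSetMap ρ hbot (φ ≫ ψ) = homGSetMap ρ hbot φ ≫ homGSetMap ρ hbot ψ := by
  apply NatTrans.ext
  ext X f
  exact (Category.assoc _ _ _).symm

/-- The fixed-point presheaf `F_M : x ↦ Hom_{G-Set}(Hom_C(x₀, x), M)` on `C`. -/
def fixedPointPresheaf (M : GSet G) : Cᵒᵖ ⥤ Type where
  obj c := homGSet ρ hbot c.unop ⟶ M
  map {c c'} ψ := TypeCat.ofHom fun η => homGSetMap ρ hbot ψ.unop ≫ η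
  map_id c := by
    refine ConcreteCategory.hom_ext _ _ (fun η => ?_)
    show homGSetMap ρ hbot (𝟙 c.unop) ≫ η = η
    rw [homGSetMap_id, Category.id_comp]
  map_comp {c c' c''} ψ ψ' := by
    refine ConcreteCategory.hom_ext _ _ (fun η => ?_)
    show homGSetMap ρ hbot (ψ'.unop ≫ ψ.unop) ≫ η = _
    rw [homGSetMap_comp, Category.assoc]
    rfl

/-- The right `G`-set `𝔊(x₀)` attached to a presheaf `𝔊` on `C`: `g ∈ G`
acts as `𝔊(ρ(g, id))`. -/
def evalGSet (𝔊 : Cᵒᵖ ⥤ Type) : GSet G where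
  obj _ := 𝔊.obj (Opposite.op (ρ.obj ⟨x₀⟩))
  map f := 𝔊.map (ρ.map (gmor hbot f.unop)).op
  map_id _ := by
    show 𝔊.map (ρ.map (gmor hbot (1 : G))).op = _
    rw [gmor_one, ρ.map_id]
    exact 𝔊.map_id _
  map_comp {X Y Z} f g := by
    show 𝔊.map (ρ.map (gmor hbot (f.unop * g.unop))).op = _
    rw [← gmor_comp, ρ.map_comp, op_comp, 𝔊.map_comp]

end

/-- `ρ : P⋊G ⥤ C` is a category extension: it is bijective on objects,
surjective on morphism sets, the kernel groups `K(y)` act freely by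
postcomposition on hom sets, and `ρ` exactly identifies the `K(y)`-orbits of
morphisms, i.e. `K(y)\Hom(x, y) ≅ Hom_C(ρx, ρy)`. -/
structure IsCatExtension (ρ : Transporter G P ⥤ C) : Prop where
  bij_obj : Function.Bijective ρ.obj
  surj_map : ∀ {x y : Transporter G P} (f : ρ.obj x ⟶ ρ.obj y), ∃ u : x ⟶ y, ρ.map u = f
  free : ∀ {y : Transporter G P} (α : y ⟶ y), ρ.map α = 𝟙 (ρ.obj y) →
    ∀ {x : Transporter G P} (u : x ⟶ y), u ≫ α = u → α = 𝟙 y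
  fiber : ∀ {x y : Transporter G P} (u u' : x ⟶ y),
    ρ.map u = ρ.map u' ↔ ∃ α : y ⟶ y, ρ.map α = 𝟙 (ρ.obj y) ∧ u ≫ α = u'

/-! ## The transporter category `T(G)` on subgroups -/

/-- The transporter category `T(G)`: objects are the subgroups of `G`,
morphisms `H ⟶ K` are elements `g ∈ G` with `gHg⁻¹ ≤ K`. -/
@[ext] structure TransporterCat (G : Type) [Group G] where sub : Subgroup G

instance TransporterCat.category (G : Type) [Group G] : Category (TransporterCat G) where
  Hom H K := { g : G // ∀ h ∈ H.sub, g * h * g⁻¹ ∈ K.sub }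
  id H := ⟨1, fun h hh => by simpa using hh⟩
  comp {H K L} f g := ⟨g.1 * f.1, fun h hh => by
    have hmem := g.2 _ (f.2 h hh)
    have heq : g.1 * (f.1 * h * f.1⁻¹) * g.1⁻¹ = (g.1 * f.1) * h * (g.1 * f.1)⁻¹ := by group
    rwa [heq] at hmem⟩
  id_comp f := Subtype.ext (mul_one _)
  comp_id f := Subtype.ext (one_mul _)
  assoc f g h := Subtype.ext (mul_assoc h.1 g.1 f.1).symm

/-- The conjugate subgroup `gHg⁻¹`. -/
def conjSubgroup (g : G) (H : Subgroup G) : Subgroup G :=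
  H.map (MulAut.conj g).toMonoidHom

lemma conjSubgroup_inv_mem {g : G} {H : Subgroup G} {w : G}
    (hw : w ∈ conjSubgroup g H) : g⁻¹ * w * g⁻¹⁻¹ ∈ H := by
  obtain ⟨h, hh, rfl⟩ := hw
  have : g⁻¹ * ((MulAut.conj g).toMonoidHom h) * g⁻¹⁻¹ = h := by
    simp [MulAut.conj_apply]; group
  rwa [this]

/-- The `G`-map `H\G → K\G`, `Hk ↦ Kgk`, attached to `g ∈ G` with `gHg⁻¹ ≤ K`. -/
def transToOrbit {H K : Subgroup G} (g : { g : G // ∀ h ∈ H, g * h * g⁻¹ ∈ K }) :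
    cosetGSet H ⟶ cosetGSet K where
  app _ := TypeCat.ofHom (Quotient.map' (fun k => g.1 * k)
    (fun a b hab => by
      rw [QuotientGroup.rightRel_apply] at hab ⊢
      have := g.2 _ hab
      have heq : g.1 * (b * a⁻¹) * g.1⁻¹ = (g.1 * b) * (g.1 * a)⁻¹ := by group
      rwa [heq] at this))
  naturality X Y f := by
    ext q
    induction q using Quotient.inductionOn' with
    | h k => exact congrArg (Quotient.mk _) (mul_assoc g.1 k f.unop).symm

/-- The setoid on `{g : G // gHg⁻¹ ≤ K}` whose classes are right cosets `Kg`. -/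
def transSetoid (H K : Subgroup G) : Setoid { g : G // ∀ h ∈ H, g * h * g⁻¹ ∈ K } where
  r a b := a.1 * b.1⁻¹ ∈ K
  iseqv := by
    constructor
    · intro a; simpa using K.one_mem
    · intro a b h
      simpa using K.inv_mem h
    · intro a b c h1 h2
      have := K.mul_mem h1 h2
      simpa [mul_assoc] using this

/-! ## The coset space `H\G` as a discrete `G`-poset -/

/-- The coset space `H\G` as a discretely ordered `G`-poset, with `g` acting
by `Hk ↦ Hkg⁻¹`. -/
def CosetPoset (G : Type) [Group G] (H : Subgroup G) :=
  Quotient (QuotientGroup.rightRel H)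

instance (H : Subgroup G) : PartialOrder (CosetPoset G H) where
  le x y := x = y
  le_refl _ := rfl
  le_trans _ _ _ h h' := Eq.trans h h'
  le_antisymm _ _ h _ := h

instance (H : Subgroup G) : MulAction G (CosetPoset G H) where
  smul g := Quotient.map' (fun k => k * g⁻¹)
    (fun a b hab => by
      rw [QuotientGroup.rightRel_apply] at hab ⊢
      simpa [mul_assoc] using hab)
  one_smul q := by
    induction q using Quotient.inductionOn' with
    | h k => exact congrArg (Quotient.mk _) (by simp)
  mul_smul a b q := by
    induction q using Quotient.inductionOn' with
    | h k => exact congrArg (Quotient.mk _) (by simp [mul_assoc])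

instance (H : Subgroup G) : CovariantClass G (CosetPoset G H) (· • ·) (· ≤ ·) where
  elim g x y h := le_of_eq (congrArg (g • ·) (le_antisymm h (Eq.symm h : y ≤ x)))

/-! ## Underlying `G`-set of a right `RG`-module -/

/-- The underlying right `G`-set of a right `RG`-module. -/
noncomputable def UGSet (R : Type) [CommRing R]
    (M : ModuleCat (MonoidAlgebra R G)ᵐᵒᵖ) : GSet G where
  obj _ := M
  map f := TypeCat.ofHom fun m => (MulOpposite.op (MonoidAlgebra.single f.unop (1 : R))) • m
  map_id _ := by
    ext m
    show (MulOpposite.op (MonoidAlgebra.single (1 : G) (1 : R))) • m = m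
    rw [← MonoidAlgebra.one_def, MulOpposite.op_one, one_smul]
  map_comp {X Y Z} f g := by
    ext m
    show (MulOpposite.op (MonoidAlgebra.single (f.unop * g.unop) (1 : R))) • m =
      (MulOpposite.op (MonoidAlgebra.single g.unop (1 : R))) •
        ((MulOpposite.op (MonoidAlgebra.single f.unop (1 : R))) • m)
    rw [smul_smul, ← MulOpposite.op_mul, MonoidAlgebra.single_mul_single, one_mul]




/-! ## Auxiliary lemmas for the main theorem -/

section Aux

theorem Transporter.comp_val {x y z : Transporter G P} (f : x ⟶ y) (g : y ⟶ z) :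
    (f ≫ g).1 = g.1 * f.1 := rfl

variable {x₀ : P} (hbot : ∀ x : P, x₀ ≤ x)

/-- The morphism `(g, u) : x₀ ⟶ y` for any `g` and any target `y`. -/
def toMor (g : G) (y : Transporter G P) : (⟨x₀⟩ : Transporter G P) ⟶ y :=
  ⟨g, by rw [smul_bot_eq hbot g]; exact hbot y.pt⟩

/-- `g : G` as an endomorphism of the single object. -/
def sHom (g : G) : SingleObj.star G ⟶ SingleObj.star G := g

/-- The action of `g : G` on the value of a `G`-set at the unique object. -/
def gact (M : GSet G) (g : G) :
    M.obj (Opposite.op (SingleObj.star G)) → M.obj (Opposite.op (SingleObj.star G)) :=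
  M.map (sHom g).op

theorem gact_gact (M : GSet G) (a b : G) (m : M.obj (Opposite.op (SingleObj.star G))) :
    gact M a (gact M b m) = gact M (b * a) m :=
  (FunctorToTypes.map_comp_apply M (sHom b).op (sHom a).op m).symm

theorem gact_one (M : GSet G) (m : M.obj (Opposite.op (SingleObj.star G))) :
    gact M (1 : G) m = m :=
  FunctorToTypes.map_id_apply M m

include hbot in
/-- Constant presheaves `Res_π M` are sheaves for the atomic topology. -/
theorem resSheaf (J : GrothendieckTopology (Transporter G P)) (hJ : IsAtomicTopology J)
    (M : GSet G) : Presieve.IsSheaf J ((piFunctor G P).op ⋙ M) := by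
  intro X S hS fam hcompat
  obtain ⟨Y₀, f₀, hf₀⟩ := (hJ X S).1 hS
  have key : ∀ {Y : Transporter G P} (f : Y ⟶ X) (hf : S f),
      gact M f.1⁻¹ (fam f hf) = gact M f₀.1⁻¹ (fam f₀ hf₀) := by
    intro Y f hf
    have hcomm : toMor hbot f.1⁻¹ Y ≫ f = toMor hbot f₀.1⁻¹ Y₀ ≫ f₀ := by
      apply Subtype.ext
      show f.1 * f.1⁻¹ = f₀.1 * f₀.1⁻¹
      simp
    exact hcompat (toMor hbot f.1⁻¹ Y) (toMor hbot f₀.1⁻¹ Y₀) hf hf₀ hcomm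
  refine ⟨gact M f₀.1⁻¹ (fam f₀ hf₀), ?_, ?_⟩
  · intro Y f hf
    show gact M f.1 (gact M f₀.1⁻¹ (fam f₀ hf₀)) = fam f hf
    rw [← key f hf, gact_gact, inv_mul_cancel, gact_one]
  · intro t' ht'
    have h0 : gact M f₀.1 t' = fam f₀ hf₀ := ht' f₀ hf₀
    rw [← h0, gact_gact, mul_inv_cancel, gact_one]

/-- The comparison map `𝔉 ⟶ Res_π (𝔉(x₀))`. -/
def theta (𝔉 : (Transporter G P)ᵒᵖ ⥤ Type) :
    𝔉 ⟶ (piFunctor G P).op ⋙ evalGSet (𝟭 (Transporter G P)) hbot 𝔉 where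
  app X := 𝔉.map (toMor hbot 1 X.unop).op
  naturality X Y f := by
    ext s
    show 𝔉.map (toMor hbot 1 Y.unop).op (𝔉.map f s)
      = 𝔉.map (gmor hbot f.unop.1).op (𝔉.map (toMor hbot 1 X.unop).op s)
    rw [← FunctorToTypes.map_comp_apply, ← FunctorToTypes.map_comp_apply]
    have h : f ≫ (toMor hbot 1 Y.unop).op
        = (toMor hbot 1 X.unop).op ≫ (gmor hbot f.unop.1).op := by
      apply Quiver.Hom.unop_inj
      apply Subtype.ext
      show f.unop.1 * 1 = 1 * f.unop.1
      rw [mul_one, one_mul]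
    rw [h]

/-- The sieve on `x` of all morphisms `f` with `f • (dom f) = x₀`. -/
def botSieve (x : Transporter G P) : Sieve x where
  arrows w f := f.1 • w.pt = x₀
  downward_closed := by
    intro Y Z f hf g
    show (f.1 * g.1) • Z.pt = x₀
    refine le_antisymm ?_ (hbot _)
    rw [mul_smul]
    calc f.1 • (g.1 • Z.pt) ≤ f.1 • Y.pt := smul_le_smul_act f.1 g.2
    _ = x₀ := hf

include hbot in
theorem botSieve_mem (J : GrothendieckTopology (Transporter G P)) (hJ : IsAtomicTopology J)
    (x : Transporter G P) : botSieve hbot x ∈ J x :=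
  (hJ x _).2 ⟨⟨x₀⟩, toMor hbot 1 x, by show (1 : G) • x₀ = x₀; rw [one_smul]⟩

/-- Factorization of an arrow in `botSieve` through `x₀`. -/
def pmor {w x : Transporter G P} (f : w ⟶ x) (hf : f.1 • w.pt = x₀) :
    w ⟶ (⟨x₀⟩ : Transporter G P) :=
  ⟨f.1, le_of_eq hf⟩

theorem pmor_comp {w x : Transporter G P} (f : w ⟶ x) (hf : f.1 • w.pt = x₀) :
    pmor f hf ≫ toMor hbot 1 x = f :=
  Subtype.ext (one_mul f.1)

include hbot in
theorem theta_app_bijective (J : GrothendieckTopology (Transporter G P))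
    (hJ : IsAtomicTopology J) {𝔉 : (Transporter G P)ᵒᵖ ⥤ Type}
    (h𝔉 : Presieve.IsSheaf J 𝔉) (X : (Transporter G P)ᵒᵖ) :
    Function.Bijective ((theta hbot 𝔉).app X) := by
  have hmem := botSieve_mem hbot J hJ X.unop
  constructor
  · intro s t hst
    refine (h𝔉 _ hmem).isSeparatedFor (fun Y f _ => 𝔉.map f.op s) s t
      (fun Y f hf => rfl) ?_
    intro Y f hf
    show 𝔉.map f.op t = 𝔉.map f.op s
    have hst' : 𝔉.map (toMor hbot 1 X.unop).op s = 𝔉.map (toMor hbot 1 X.unop).op t := hst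
    rw [← pmor_comp hbot f hf, op_comp, FunctorToTypes.map_comp_apply,
      FunctorToTypes.map_comp_apply, ← hst']
  · intro a
    change 𝔉.obj (Opposite.op (⟨x₀⟩ : Transporter G P)) at a
    let fam : Presieve.FamilyOfElements 𝔉 ((botSieve hbot X.unop) : Presieve X.unop) :=
      fun Y f hf => 𝔉.map (pmor f hf).op a
    have hcompat : Presieve.FamilyOfElements.Compatible fam := by
      intro Y₁ Y₂ Z g₁ g₂ f₁ f₂ h₁ h₂ hcomm
      show 𝔉.map g₁.op (𝔉.map (pmor f₁ h₁).op a) = 𝔉.map g₂.op (𝔉.map (pmor f₂ h₂).op a)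
      rw [← FunctorToTypes.map_comp_apply, ← FunctorToTypes.map_comp_apply]
      have h : (pmor f₁ h₁).op ≫ g₁.op = (pmor f₂ h₂).op ≫ g₂.op := by
        rw [← op_comp, ← op_comp]
        apply Quiver.Hom.unop_inj
        apply Subtype.ext
        show f₁.1 * g₁.1 = f₂.1 * g₂.1
        exact congrArg Subtype.val hcomm
      rw [h]
    obtain ⟨t, ht, -⟩ := h𝔉 _ hmem fam hcompat
    refine ⟨t, ?_⟩
    have hι : botSieve hbot X.unop (toMor hbot 1 X.unop) := by
      show (1 : G) • x₀ = x₀; rw [one_smul]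
    have h := ht (toMor hbot 1 X.unop) hι
    show 𝔉.map (toMor hbot 1 X.unop).op t = a
    rw [h]
    have hp : pmor (toMor hbot 1 X.unop) hι = 𝟙 (⟨x₀⟩ : Transporter G P) :=
      Subtype.ext rfl
    show 𝔉.map (pmor (toMor hbot 1 X.unop) hι).op a = a
    rw [hp, op_id, FunctorToTypes.map_id_apply]

include hbot in
theorem isIso_theta (J : GrothendieckTopology (Transporter G P))
    (hJ : IsAtomicTopology J) {𝔉 : (Transporter G P)ᵒᵖ ⥤ Type}
    (h𝔉 : Presieve.IsSheaf J 𝔉) : IsIso (theta hbot 𝔉) := by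
  have : ∀ X, IsIso ((theta hbot 𝔉).app X) :=
    fun X => (isIso_iff_bijective _).2 (theta_app_bijective hbot J hJ h𝔉 X)
  exact NatIso.isIso_of_isIso_app _

end Aux

/-- On `(P⋊G, J_at)` (`P` a `G`-poset with initial object `x₀`), a presheaf is a
sheaf iff it is isomorphic to a constant presheaf `Res_π M` for some right
`G`-set `M`; and the sheafification of any presheaf `𝔉` is `Res_π (𝔉(x₀))`. -/
theorem sheaves_on_transporter_are_constant (G : Type) [Group G] [Finite G] (P : Type) [PartialOrder P]
    [MulAction G P] [CovariantClass G P (· • ·) (· ≤ ·)]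
    (x₀ : P) (hbot : ∀ x : P, x₀ ≤ x)
    (J : GrothendieckTopology (Transporter G P)) (hJ : IsAtomicTopology J) :
    (∀ F : (Transporter G P)ᵒᵖ ⥤ Type,
      Presieve.IsSheaf J F ↔ ∃ M : GSet G, Nonempty (F ≅ (piFunctor G P).op ⋙ M)) ∧
    (∀ 𝔉 : (Transporter G P)ᵒᵖ ⥤ Type,
      Nonempty (J.sheafify 𝔉 ≅
        (piFunctor G P).op ⋙ evalGSet (𝟭 (Transporter G P)) hbot 𝔉)) := by
  constructor
  · intro F
    constructor
    · intro hF
      have := isIso_theta hbot J hJ hF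
      exact ⟨evalGSet (𝟭 (Transporter G P)) hbot F, ⟨asIso (theta hbot F)⟩⟩
    · rintro ⟨M, ⟨e⟩⟩
      exact Presieve.isSheaf_iso J e.symm (resSheaf hbot J hJ M)
  · intro 𝔉
    have hRes : Presheaf.IsSheaf J
        ((piFunctor G P).op ⋙ evalGSet (𝟭 (Transporter G P)) hbot 𝔉) := by
      rw [isSheaf_iff_isSheaf_of_type]
      exact resSheaf hbot J hJ _
    set L := GrothendieckTopology.sheafifyLift J (theta hbot 𝔉) hRes with hL
    have hcomp : J.toSheafify 𝔉 ≫ L = theta hbot 𝔉 :=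
      GrothendieckTopology.toSheafify_sheafifyLift J _ _
    -- `theta` is locally injective and locally surjective
    have hinj : Presheaf.IsLocallyInjective J (theta hbot 𝔉) := by
      refine ⟨fun {X} s t h => (hJ _ _).2 ⟨⟨x₀⟩, toMor hbot 1 X.unop, ?_⟩⟩
      exact h
    have hsurj : Presheaf.IsLocallySurjective J (theta hbot 𝔉) := by
      refine ⟨fun {U} s => (hJ _ _).2 ⟨⟨x₀⟩, toMor hbot 1 U, ⟨s, ?_⟩⟩⟩
      show 𝔉.map (toMor hbot 1 (⟨x₀⟩ : Transporter G P)).op s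
        = 𝔉.map (gmor hbot 1).op s
      have h : toMor hbot 1 (⟨x₀⟩ : Transporter G P) = gmor hbot 1 := Subtype.ext rfl
      rw [h]
    have hWθ : J.W (theta hbot 𝔉) := by
      have := hinj
      have := hsurj
      exact J.W_of_isLocallyBijective (theta hbot 𝔉)
    have hWσ : J.W (J.toSheafify 𝔉) := by
      intro Z hZ
      constructor
      · intro g₁ g₂ h
        exact (GrothendieckTopology.sheafifyLift_unique J (J.toSheafify 𝔉 ≫ g₂) hZ g₁ h).trans
          (GrothendieckTopology.sheafifyLift_unique J (J.toSheafify 𝔉 ≫ g₂) hZ g₂ rfl).symm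
      · intro g
        exact ⟨GrothendieckTopology.sheafifyLift J g hZ,
          GrothendieckTopology.toSheafify_sheafifyLift J g hZ⟩
    have hWL : J.W L := by
      intro Z hZ
      constructor
      · intro g₁ g₂ h
        apply (hWθ Z hZ).1
        show theta hbot 𝔉 ≫ g₁ = theta hbot 𝔉 ≫ g₂
        have h' : L ≫ g₁ = L ≫ g₂ := h
        rw [← hcomp, Category.assoc, Category.assoc, h']
      · intro h
        obtain ⟨g, hg⟩ := (hWθ Z hZ).2 (J.toSheafify 𝔉 ≫ h)
        refine ⟨g, ?_⟩
        apply (hWσ Z hZ).1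
        show J.toSheafify 𝔉 ≫ L ≫ g = J.toSheafify 𝔉 ≫ h
        rw [← Category.assoc, hcomp]
        exact hg
    have : IsIso L := (ObjectProperty.isLocal_iff_isIso
      (P := Presheaf.IsSheaf J) L (J.sheafify_isSheaf 𝔉) hRes).1 hWL
    exact ⟨asIso L⟩
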